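/- arXiv:1901.05710 — 2 statements merged into one kernel-verified Lean document; each statement's English description precedes it below -/
import Mathlib

section
/- A group T is called telescopic if for every finite group Γ there exists a finite-index subgroup H ≤ T with N_T(H)/H ≅ Γ. If f : A → B is a surjective group homomorphism and B is telescopic, then A is telescopic. -/
/-- A group `T` is telescopic if every finite group is realised as `N_T(H)/H`
for some finite-index subgroup `H ≤ T`. -/
def IsTelescopic (T : Type*) [Group T] : Prop :=
  ∀ (Γ : Type) [Group Γ] [Finite Γ],
    ∃ H : Subgroup T, H.FiniteIndex ∧
      Nonempty (((Subgroup.normalizer (H : Set T)) ⧸ H.subgroupOf (Subgroup.normalizer (H : Set T))) ≃* Γ)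

/-- Telescopicity pulls back along surjective group homomorphisms. -/
theorem isTelescopic_of_surjective {A B : Type*} [Group A] [Group B]
    (f : A →* B) (hf : Function.Surjective f) (hB : IsTelescopic B) :
    IsTelescopic A := by
  intro Γ _ _
  obtain ⟨H, hFI, ⟨e⟩⟩ := hB Γ
  refine ⟨H.comap f, ⟨?_⟩, ?_⟩
  · rw [Subgroup.index_comap_of_surjective _ hf]
    exact hFI.index_ne_zero
  · have hN : Subgroup.normalizer (H.comap f : Set A) = (Subgroup.normalizer (H : Set B)).comap f :=
      (Subgroup.comap_normalizer_eq_of_surjective H hf).symm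
    set N := Subgroup.normalizer (H.comap f : Set A) with hNdef
    have hmem : ∀ x : A, x ∈ N → f x ∈ (Subgroup.normalizer (H : Set B)) := fun x hx => by
      rw [hN, Subgroup.mem_comap] at hx; exact hx
    let g : N →* (Subgroup.normalizer (H : Set B)) :=
      MonoidHom.codRestrict (f.comp N.subtype) (Subgroup.normalizer (H : Set B)) fun x => hmem x x.2
    let φ : N →* ((Subgroup.normalizer (H : Set B)) ⧸ H.subgroupOf (Subgroup.normalizer (H : Set B))) :=
      (QuotientGroup.mk' _).comp g
    have hsurj : Function.Surjective φ := by
      refine (QuotientGroup.mk'_surjective _).comp ?_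
      intro y
      obtain ⟨a, ha⟩ := hf y.1
      have haN : a ∈ N := by rw [hN, Subgroup.mem_comap, ha]; exact y.2
      exact ⟨⟨a, haN⟩, Subtype.ext ha⟩
    have hker : φ.ker = (H.comap f).subgroupOf N := by
      ext x
      simp only [φ, MonoidHom.mem_ker, MonoidHom.comp_apply, QuotientGroup.mk'_apply,
        QuotientGroup.eq_one_iff, Subgroup.mem_subgroupOf, Subgroup.mem_comap]
      rfl
    exact ⟨((QuotientGroup.quotientMulEquivOfEq hker.symm).trans
      (QuotientGroup.quotientKerEquivOfSurjective φ hsurj)).trans e⟩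
end

section
/- The infinite dihedral group D_∞ = ℤ/2 * ℤ/2 is not telescopic: there exists a finite group Γ (for instance any nonabelian finite group, or ℤ/3) such that no finite-index subgroup H ≤ D_∞ satisfies N(H)/H ≅ Γ. -/
open Monoid DihedralGroup

namespace InfDihedralAux

abbrev Dinf := Coprod (Multiplicative (ZMod 2)) (Multiplicative (ZMod 2))

def uu : Multiplicative (ZMod 2) := Multiplicative.ofAdd 1
def aa : Dinf := Coprod.inl uu
def bb : Dinf := Coprod.inr uu
def cc : Dinf := aa * bb

lemma aa_sq : aa * aa = 1 := by
  rw [aa, ← MonoidHom.map_mul]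
  have : uu * uu = 1 := by decide
  rw [this, map_one]

lemma bb_sq : bb * bb = 1 := by
  rw [bb, ← MonoidHom.map_mul]
  have : uu * uu = 1 := by decide
  rw [this, map_one]

lemma aa_inv : aa⁻¹ = aa := by
  rw [inv_eq_iff_mul_eq_one, aa_sq]

lemma bb_inv : bb⁻¹ = bb := by
  rw [inv_eq_iff_mul_eq_one, bb_sq]

lemma conj_cc : aa * cc * aa⁻¹ = cc⁻¹ := by
  rw [aa_inv, cc, mul_inv_rev, aa_inv, bb_inv, ← mul_assoc, aa_sq, one_mul]

def toInt (i : ZMod 0) : ℤ := i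

lemma toInt_add (i j : ZMod 0) : toInt (i + j) = toInt i + toInt j := rfl
lemma toInt_sub (i j : ZMod 0) : toInt (i - j) = toInt i - toInt j := rfl
lemma toInt_zero : toInt 0 = 0 := rfl
lemma toInt_one : toInt 1 = 1 := rfl

lemma conj_cc_zpow (k : ℤ) : aa * cc ^ k * aa⁻¹ = cc ^ (-k) := by
  rw [← conj_zpow, conj_cc, inv_zpow, zpow_neg]

lemma cc_zpow_mul_aa (k : ℤ) : cc ^ k * aa = aa * cc ^ (-k) := by
  have h := conj_cc_zpow (-k)
  rw [neg_neg] at h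
  rw [← h, aa_inv, mul_assoc, aa_sq, mul_one]

/-- hom from ZMod 2 sending the generator to `sr j`. -/
def srHom (j : ZMod 0) : Multiplicative (ZMod 2) →* DihedralGroup 0 where
  toFun x := if x = 1 then 1 else sr j
  map_one' := by simp
  map_mul' x y := by
    have h2 : ∀ z : Multiplicative (ZMod 2), z = 1 ∨ z = uu := by decide
    have hu : (uu : Multiplicative (ZMod 2)) ≠ 1 := by decide
    have huu : uu * uu = 1 := by decide
    rcases h2 x with rfl | rfl <;> rcases h2 y with rfl | rfl <;>
      simp [hu, huu, sr_mul_self]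

def Phi : Dinf →* DihedralGroup 0 := Coprod.lift (srHom 0) (srHom 1)

lemma Phi_aa : Phi aa = sr 0 := by
  rw [aa, Phi, Coprod.lift_apply_inl]
  have : (uu : Multiplicative (ZMod 2)) ≠ 1 := by decide
  simp [srHom, this]

lemma Phi_bb : Phi bb = sr 1 := by
  rw [bb, Phi, Coprod.lift_apply_inr]
  have : (uu : Multiplicative (ZMod 2)) ≠ 1 := by decide
  simp [srHom, this]

def psi : DihedralGroup 0 → Dinf
  | r i => cc ^ toInt i
  | sr i => aa * cc ^ toInt i

def Psi : DihedralGroup 0 →* Dinf where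
  toFun := psi
  map_one' := by
    show cc ^ toInt 0 = 1
    rw [toInt_zero, zpow_zero]
  map_mul' x y := by
    rcases x with i | i <;> rcases y with j | j
    · rw [r_mul_r]
      show cc ^ toInt (i + j) = cc ^ toInt i * cc ^ toInt j
      rw [toInt_add, zpow_add]
    · rw [r_mul_sr]
      show aa * cc ^ toInt (j - i) = cc ^ toInt i * (aa * cc ^ toInt j)
      rw [toInt_sub]
      refine Eq.symm ?_
      calc cc ^ toInt i * (aa * cc ^ toInt j)
          = (cc ^ toInt i * aa) * cc ^ toInt j := by rw [← mul_assoc]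
        _ = (aa * cc ^ (-toInt i)) * cc ^ toInt j := by rw [cc_zpow_mul_aa]
        _ = aa * (cc ^ (-toInt i) * cc ^ toInt j) := by rw [mul_assoc]
        _ = aa * cc ^ (-toInt i + toInt j) := by rw [← zpow_add]
        _ = aa * cc ^ (toInt j - toInt i) := by rw [← sub_eq_neg_add]
    · rw [sr_mul_r]
      show aa * cc ^ toInt (i + j) = (aa * cc ^ toInt i) * cc ^ toInt j
      rw [toInt_add, mul_assoc, ← zpow_add]
    · rw [sr_mul_sr]
      show cc ^ toInt (j - i) = (aa * cc ^ toInt i) * (aa * cc ^ toInt j)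
      rw [toInt_sub]
      refine Eq.symm ?_
      calc (aa * cc ^ toInt i) * (aa * cc ^ toInt j)
          = aa * (cc ^ toInt i * aa) * cc ^ toInt j := by
            rw [← mul_assoc, mul_assoc aa (cc ^ toInt i) aa]
        _ = aa * (aa * cc ^ (-toInt i)) * cc ^ toInt j := by rw [cc_zpow_mul_aa]
        _ = ((aa * aa) * cc ^ (-toInt i)) * cc ^ toInt j := by
            rw [← mul_assoc aa aa (cc ^ (-toInt i))]
        _ = cc ^ (-toInt i) * cc ^ toInt j := by rw [aa_sq, one_mul]
        _ = cc ^ (-toInt i + toInt j) := by rw [← zpow_add]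
        _ = cc ^ (toInt j - toInt i) := by rw [← sub_eq_neg_add]

lemma Psi_Phi (x : Dinf) : Psi (Phi x) = x := by
  induction x using Coprod.induction_on with
  | inl m =>
    have h2 : ∀ z : Multiplicative (ZMod 2), z = 1 ∨ z = uu := by decide
    rcases h2 m with rfl | rfl
    · rw [map_one, map_one, map_one]
    · show Psi (Phi aa) = aa
      rw [Phi_aa]
      show aa * cc ^ toInt 0 = aa
      rw [toInt_zero, zpow_zero, mul_one]
  | inr n =>
    have h2 : ∀ z : Multiplicative (ZMod 2), z = 1 ∨ z = uu := by decide
    rcases h2 n with rfl | rfl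
    · rw [map_one, map_one, map_one]
    · show Psi (Phi bb) = bb
      rw [Phi_bb]
      show aa * cc ^ toInt 1 = bb
      rw [toInt_one, zpow_one]
      show aa * (aa * bb) = bb
      rw [← mul_assoc, aa_sq, one_mul]
  | mul x y hx hy => rw [map_mul, map_mul, hx, hy]

lemma Phi_inj : Function.Injective Phi :=
  Function.LeftInverse.injective Psi_Phi

lemma sr_inv (i : ZMod 0) : (sr i : DihedralGroup 0)⁻¹ = sr i :=
  inv_eq_of_mul_eq_one_right (sr_mul_self i)

lemma r_inv (i : ZMod 0) : (r i : DihedralGroup 0)⁻¹ = r (-i) := by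
  refine inv_eq_of_mul_eq_one_right ?_
  rw [r_mul_r, add_neg_cancel, one_def]

lemma sq_one {g : Dinf} {i : ZMod 0} (h : Phi g = sr i) : g * g = 1 := by
  apply Phi_inj
  rw [map_mul, h, sr_mul_self, map_one]

lemma conj_rot {g x : Dinf} {i j : ZMod 0} (hg : Phi g = sr i) (hx : Phi x = r j) :
    g * x * g⁻¹ = x⁻¹ := by
  apply Phi_inj
  rw [map_mul, map_mul, map_inv, map_inv, hg, hx, sr_inv, sr_mul_r, sr_mul_sr, r_inv]
  congr 1
  ring

end InfDihedralAux

open InfDihedralAux in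
/-- The infinite dihedral group `ℤ/2 * ℤ/2` is not telescopic: some finite group `Γ`
is not realised as `N(H)/H` for any finite-index subgroup `H`. -/
theorem infinite_dihedral_not_telescopic :
    ∃ (Γ : Type) (_ : Group Γ) (_ : Finite Γ),
      ∀ H : Subgroup (Coprod (Multiplicative (ZMod 2)) (Multiplicative (ZMod 2))),
        H.FiniteIndex →
          ¬ Nonempty ((Subgroup.normalizer (H : Set (Coprod (Multiplicative (ZMod 2)) (Multiplicative (ZMod 2)))) ⧸ H.subgroupOf (Subgroup.normalizer (H : Set (Coprod (Multiplicative (ZMod 2)) (Multiplicative (ZMod 2)))))) ≃* Γ) := by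
  refine ⟨Multiplicative (ZMod 3), inferInstance, inferInstance, ?_⟩
  rintro H _ ⟨e⟩
  by_cases hC : ∀ h ∈ H, ∃ i, Phi h = r i
  · -- `H` consists of "rotations"; `aa` gives an element of order 2 in `N(H)/H`.
    have haN : aa ∈ (Subgroup.normalizer (H : Set Dinf)) := by
      rw [Subgroup.mem_normalizer_iff]
      intro x
      constructor
      · intro hx
        obtain ⟨i, hi⟩ := hC x hx
        rw [conj_rot Phi_aa hi]
        exact H.inv_mem hx
      · intro hx
        obtain ⟨i, hi⟩ := hC _ hx
        have h2 : aa * (aa * x * aa⁻¹) * aa⁻¹ = (aa * x * aa⁻¹)⁻¹ := conj_rot Phi_aa hi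
        have h3 : aa * (aa * x * aa⁻¹) * aa⁻¹ = x := by
          rw [aa_inv, ← mul_assoc, ← mul_assoc, aa_sq, one_mul, mul_assoc, aa_sq, mul_one]
        rw [h3] at h2
        rw [h2]
        exact H.inv_mem hx
    have haH : aa ∉ H := by
      intro h
      obtain ⟨i, hi⟩ := hC aa h
      rw [Phi_aa] at hi
      exact nomatch hi
    set A : (Subgroup.normalizer (H : Set Dinf)) := ⟨aa, haN⟩ with hA
    set q : (Subgroup.normalizer (H : Set Dinf)) ⧸ H.subgroupOf (Subgroup.normalizer (H : Set Dinf)) := QuotientGroup.mk A with hqdef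
    have hAA : A * A = 1 := Subtype.ext aa_sq
    have hq2 : q * q = 1 := by
      rw [hqdef, ← QuotientGroup.mk_mul, hAA, QuotientGroup.mk_one]
    have hq1 : q ≠ 1 := by
      rw [hqdef, Ne, QuotientGroup.eq_one_iff]
      simpa [Subgroup.mem_subgroupOf] using haH
    have h1 : e q * e q = 1 := by rw [← map_mul, hq2, map_one]
    have h2 : e q ≠ 1 := fun h => hq1 (e.injective (by rw [h, map_one]))
    have h3 : ∀ y : Multiplicative (ZMod 3), y * y = 1 → y = 1 := by decide
    exact h2 (h3 _ h1)
  · -- `H` contains a "reflection"; every element of `N(H)/H` squares to `1`.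
    push_neg at hC
    obtain ⟨h0, hh0, hr⟩ := hC
    have hj : ∃ j, Phi h0 = sr j := by
      cases hp : Phi h0 with
      | r i => exact absurd hp (hr i)
      | sr i => exact ⟨i, rfl⟩
    obtain ⟨j, hj⟩ := hj
    have key : ∀ g ∈ (Subgroup.normalizer (H : Set Dinf)), g * g ∈ H := by
      intro g hg
      cases hp : Phi g with
      | sr i => rw [sq_one hp]; exact H.one_mem
      | r i =>
        have h1 : g * h0 * g⁻¹ ∈ H := (Subgroup.mem_normalizer_iff.mp hg h0).mp hh0
        have hpginv : Phi g⁻¹ = r (-i) := by rw [map_inv, hp, r_inv]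
        have h2 : h0 * g⁻¹ * h0⁻¹ = g := by rw [conj_rot hj hpginv, inv_inv]
        have h4 : (g * h0 * g⁻¹) * h0⁻¹ = g * g := by
          calc (g * h0 * g⁻¹) * h0⁻¹ = g * (h0 * g⁻¹ * h0⁻¹) := by
                rw [mul_assoc, mul_assoc, ← mul_assoc h0 g⁻¹ h0⁻¹]
            _ = g * g := by rw [h2]
        rw [← h4]
        exact H.mul_mem h1 (H.inv_mem hh0)
    have allsq : ∀ q : (Subgroup.normalizer (H : Set Dinf)) ⧸ H.subgroupOf (Subgroup.normalizer (H : Set Dinf)), q * q = 1 := by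
      intro q
      refine QuotientGroup.induction_on q ?_
      intro z
      rw [← QuotientGroup.mk_mul, QuotientGroup.eq_one_iff]
      exact Subgroup.mem_subgroupOf.mpr (key z.1 z.2)
    have hall : ∀ y : Multiplicative (ZMod 3), y * y = 1 := by
      intro y
      calc y * y = e (e.symm y * e.symm y) := by rw [map_mul, e.apply_symm_apply]
        _ = 1 := by rw [allsq, map_one]
    exact absurd hall (by decide)
end
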